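/- Let L ≥ 1 be an integer, let λ_1, …, λ_L be positive reals with λ_1 > λ_i for all i ≥ 2, let ζ > 0, let ξ_1 > 0, and let ξ_2, …, ξ_L be nonzero reals. Fix z ∈ ℝ and set b_K = λ_1·(log K + log(ζ/ξ_1)). Then lim_{K→∞} K·ζ·Σ_{i=1}^L e^{−(λ_1 z + b_K)/λ_i} / ξ_i = e^{−z}. -/

import Mathlib

open Filter

/-- limit computation in the proof of Lemma 3: with `λ_1` the strictly
largest of the positive reals `λ_i`, `ζ > 0`, `ξ_1 > 0`, `ξ_i ≠ 0`, and
`b_K = λ_1(log K + log(ζ/ξ_1))`, one has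
`K·ζ·∑_i e^{-(λ_1 z + b_K)/λ_i}/ξ_i → e^{-z}` as `K → ∞`. -/
theorem stmt_13 (L : ℕ) (hL : 0 < L) (lam : Fin L → ℝ) (hpos : ∀ i, 0 < lam i)
    (hmax : ∀ i : Fin L, i ≠ ⟨0, hL⟩ → lam i < lam ⟨0, hL⟩)
    (ζ : ℝ) (hζ : 0 < ζ) (ξ : Fin L → ℝ) (hξ1 : 0 < ξ ⟨0, hL⟩) (hξ : ∀ i, ξ i ≠ 0)
    (z : ℝ) :
    Tendsto (fun K : ℕ => (K : ℝ) * ζ *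
        ∑ i, Real.exp (-(lam ⟨0, hL⟩ * z +
            lam ⟨0, hL⟩ * (Real.log K + Real.log (ζ / ξ ⟨0, hL⟩))) / lam i) / ξ i)
      atTop (nhds (Real.exp (-z))) := by
  set i0 : Fin L := ⟨0, hL⟩ with hi0
  have hlam1 : 0 < lam i0 := hpos i0
  have key : ∀ i : Fin L, Tendsto (fun K : ℕ => (K : ℝ) * ζ *
      (Real.exp (-(lam i0 * z + lam i0 * (Real.log K + Real.log (ζ / ξ i0))) / lam i) / ξ i))
      atTop (nhds (if i = i0 then Real.exp (-z) else 0)) := by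
    intro i
    by_cases hi : i = i0
    · simp only [hi, if_pos rfl]
      apply Tendsto.congr' (f₁ := fun _ : ℕ => Real.exp (-z))
      · filter_upwards [eventually_ge_atTop 1] with K hK
        have hK0 : (0:ℝ) < (K:ℝ) := by exact_mod_cast hK
        have harg : -(lam i0 * z + lam i0 * (Real.log K + Real.log (ζ / ξ i0))) / lam i0
            = -z + (-Real.log K) + (-Real.log (ζ / ξ i0)) := by
          field_simp; ring
        rw [harg, Real.exp_add, Real.exp_add, Real.exp_neg (Real.log (K:ℝ)),
          Real.exp_neg (Real.log (ζ / ξ i0)), Real.exp_log hK0,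
          Real.exp_log (div_pos hζ hξ1)]
        field_simp
      · exact tendsto_const_nhds
    · simp only [if_neg hi]
      set a : ℝ := lam i0 / lam i with ha
      have hlami : 0 < lam i := hpos i
      have ha1 : 1 < a := (one_lt_div hlami).mpr (hmax i hi)
      set C : ℝ := ζ / ξ i * Real.exp (-(lam i0 * z + lam i0 * Real.log (ζ / ξ i0)) / lam i)
      have hlim : Tendsto (fun K : ℕ => C * (K : ℝ) ^ (1 - a)) atTop (nhds 0) := by
        have h1 : Tendsto (fun x : ℝ => C * x ^ (-(a - 1))) atTop (nhds (C * 0)) :=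
          (tendsto_rpow_neg_atTop (by linarith)).const_mul C
        rw [mul_zero] at h1
        have := h1.comp tendsto_natCast_atTop_atTop (α := ℕ)
        simpa [neg_sub, Function.comp_def] using this
      apply Tendsto.congr' _ hlim
      filter_upwards [eventually_ge_atTop 1] with K hK
      have hK0 : (0:ℝ) < (K:ℝ) := by exact_mod_cast hK
      have harg : -(lam i0 * z + lam i0 * (Real.log K + Real.log (ζ / ξ i0))) / lam i
          = -(lam i0 * z + lam i0 * Real.log (ζ / ξ i0)) / lam i + Real.log (K:ℝ) * (-a) := by
        have h2 : Real.log (K:ℝ) * (-a) = -(lam i0 * Real.log (K:ℝ)) / lam i := by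
          rw [ha, mul_neg, mul_comm (Real.log (K:ℝ)), div_mul_eq_mul_div, neg_div]
        rw [h2, ← add_div]
        congr 1
        ring
      rw [harg, Real.exp_add, ← Real.rpow_def_of_pos hK0 (-a)]
      have hKpow : (K:ℝ) * (K:ℝ) ^ (-a) = (K:ℝ) ^ (1 - a) := by
        rw [sub_eq_add_neg, Real.rpow_add hK0, Real.rpow_one]
      simp only [C]
      rw [← hKpow]
      ring
  have hsum := tendsto_finset_sum Finset.univ (fun i _ => key i)
  have hval : ∑ i : Fin L, (if i = i0 then Real.exp (-z) else 0) = Real.exp (-z) := by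
    simp
  rw [hval] at hsum
  apply hsum.congr
  intro K
  rw [Finset.mul_sum]
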